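/- With the fragmentation C_n = B \ U_n constructed from a uniformly Fréchet convergence ideal I via the choice functions F_k, if {a_n} is a sequence with a_n ∉ C_n for each n, then {a_n} ∈ I. -/
import Mathlib


open Filter Topology

variable {α : Type*}

/-- A convergence ideal on a Boolean algebra: a set of infinite sequences
(i) with no nonzero common lower bound, (ii) closed under subsequences,
(iii) closed under minorization, (iv) closed under pairwise joins, and
(v) containing every infinite antichain (sequence of pairwise disjoint nonzero elements). -/
def IsConvIdeal [BooleanAlgebra α] (I : Set (ℕ → α)) : Prop :=
  (∀ a ∈ I, ∀ b : α, (∀ n, b ≤ a n) → b = ⊥) ∧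
  (∀ a ∈ I, ∀ φ : ℕ → ℕ, StrictMono φ → (fun n => a (φ n)) ∈ I) ∧
  (∀ a ∈ I, ∀ b : ℕ → α, (∀ n, b n ≤ a n) → b ∈ I) ∧
  (∀ a ∈ I, ∀ b ∈ I, (fun n => a n ⊔ b n) ∈ I) ∧
  (∀ a : ℕ → α, (∀ n, a n ≠ ⊥) → (∀ i j, i ≠ j → a i ⊓ a j = ⊥) → a ∈ I)

/-- `ConvTo I a c` : the sequence `a` converges to `c`, i.e. `{a n ∆ c} ∈ I`. -/
def ConvTo [BooleanAlgebra α] (I : Set (ℕ → α)) (a : ℕ → α) (c : α) : Prop :=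
  (fun n => symmDiff (a n) c) ∈ I

/-- `F k` picks a term of its argument sequence. -/
def IsSelective [BooleanAlgebra α] (F : ℕ → (ℕ → α) → α) : Prop :=
  ∀ k, ∀ x : ℕ → α, ∃ n, F k x = x n

/-- Uniform Fréchet property of a convergence ideal witnessed by choice functions `F`. -/
def UnifFrechet [BooleanAlgebra α] (I : Set (ℕ → α)) (F : ℕ → (ℕ → α) → α) : Prop :=
  ∀ x : ℕ → ℕ → α, (∀ k, x k ∈ I) → (fun k => F k (x k)) ∈ I

/-- `Vset I F k = {a : a ≤ F k x for some x ∈ I}`. -/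
def Vset [BooleanAlgebra α] (I : Set (ℕ → α)) (F : ℕ → (ℕ → α) → α) (k : ℕ) : Set α :=
  {a | ∃ x ∈ I, a ≤ F k x}

/-- `Uset I F n = Vset 0 ∩ ... ∩ Vset n`. -/
def Uset [BooleanAlgebra α] (I : Set (ℕ → α)) (F : ℕ → (ℕ → α) → α) (n : ℕ) : Set α :=
  {a | ∀ k ≤ n, a ∈ Vset I F k}

/-- `Cset I F n = B \\ Uset I F n`. -/
def Cset [BooleanAlgebra α] (I : Set (ℕ → α)) (F : ℕ → (ℕ → α) → α) (n : ℕ) : Set α :=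
  (Uset I F n)ᶜ

theorem stmt11 [BooleanAlgebra α]
    (I : Set (ℕ → α)) (hI : IsConvIdeal I)
    (F : ℕ → (ℕ → α) → α) (hsel : IsSelective F) (hunif : UnifFrechet I F)
    (a : ℕ → α) (ha : ∀ n, a n ∉ Cset I F n) : a ∈ I := by
  have hV : ∀ n, a n ∈ Vset I F n := by
    intro n
    have h : a n ∈ Uset I F n := by
      have := ha n
      simpa [Cset] using this
    exact h n le_rfl
  choose x hxI hxle using hV
  have hF : (fun n => F n (x n)) ∈ I := hunif x hxI
  exact hI.2.2.1 _ hF a hxle
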